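/- Let f : [a,b] → ℝ be continuous and integrable on [a,b] with 0 ≤ a < b, let k > 1, and suppose |f|^{k/(k-1)} is (α,m)-convex for some fixed (α,m) ∈ (0,1]². Then for any fixed p, q > 0, ∫_a^b (x-a)^p (b-x)^q f(x) dx ≤ (b-a)^{p+q+1} (α+1)^{-(k-1)/k} [β(kp+1, kq+1)]^{1/k} [|f(b)|^{k/(k-1)} + α m |f(a/m)|^{k/(k-1)}]^{(k-1)/k}. -/

import Mathlib

open Real Set MeasureTheory intervalIntegral

lemma aux_subst (a b r s : ℝ) (hab : a < b) :
    ∫ x in a..b, (x-a)^r * (b-x)^s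
      = (b-a)^(r+s+1) * ∫ t in (0:ℝ)..1, t^r * (1-t)^s := by
  have hc : (0:ℝ) < b - a := sub_pos.2 hab
  have h := intervalIntegral.integral_comp_mul_add (a := 0) (b := 1)
      (fun x => (x-a)^r * (b-x)^s) hc.ne' a
  simp only [mul_zero, zero_add, mul_one, sub_add_cancel] at h
  have h2 : (∫ t in (0:ℝ)..1, ((b-a)*t + a - a)^r * (b - ((b-a)*t + a))^s)
      = (b-a)^(r+s) * ∫ t in (0:ℝ)..1, t^r * (1-t)^s := by
    rw [← intervalIntegral.integral_const_mul]
    apply intervalIntegral.integral_congr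
    intro t ht
    rw [Set.uIcc_of_le (by norm_num : (0:ℝ) ≤ 1)] at ht
    have ht0 : 0 ≤ t := ht.1
    have ht1 : 0 ≤ 1 - t := by linarith [ht.2]
    have e1 : (b-a)*t + a - a = (b-a)*t := by ring
    have e2 : b - ((b-a)*t + a) = (b-a)*(1-t) := by ring
    simp only [e1, e2, Real.mul_rpow hc.le ht0, Real.mul_rpow hc.le ht1,
      Real.rpow_add hc]
    ring
  rw [h2] at h
  have := h.symm
  rw [smul_eq_mul] at this
  have h3 : ∫ x in a..b, (x-a)^r * (b-x)^s
      = (b-a) * ((b-a)^(r+s) * ∫ t in (0:ℝ)..1, t^r * (1-t)^s) := by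
    field_simp at this ⊢
    linarith [this]
  rw [h3, Real.rpow_add_one hc.ne']
  ring

lemma aux_talpha (a b α : ℝ) (hab : a < b) (hα : 0 < α) :
    ∫ x in a..b, ((x-a)/(b-a))^α = (b-a)/(α+1) := by
  have hc : (0:ℝ) < b - a := sub_pos.2 hab
  have h1 : ∫ x in a..b, ((x-a)/(b-a))^α
      = ((b-a)^α)⁻¹ * ∫ x in a..b, (x-a)^α := by
    rw [← intervalIntegral.integral_const_mul]
    apply intervalIntegral.integral_congr
    intro x hx
    rw [Set.uIcc_of_le hab.le] at hx
    simp only [Real.div_rpow (by linarith [hx.1] : (0:ℝ) ≤ x - a) hc.le]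
    rw [div_eq_inv_mul]
  have h2 : ∫ x in a..b, (x-a)^α = (b-a)^(α+1) / (α+1) := by
    have hs := intervalIntegral.integral_comp_sub_right (a := a) (b := b)
      (fun x => x ^ α) a
    simp only [sub_self] at hs
    rw [hs, integral_rpow (Or.inl (by linarith)),
      Real.zero_rpow (by linarith : α + 1 ≠ 0)]
    ring
  rw [h1, h2]
  have hne : (b-a)^α ≠ 0 := (Real.rpow_pos_of_pos hc α).ne'
  rw [Real.rpow_add_one hc.ne']
  field_simp

noncomputable def beta (x y : ℝ) : ℝ := ∫ t in (0:ℝ)..1, t ^ (x-1) * (1-t) ^ (y-1)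

def AMConvexOn (s : Set ℝ) (α m : ℝ) (g : ℝ → ℝ) : Prop :=
  ∀ x ∈ s, ∀ y ∈ s, ∀ t ∈ Set.Icc (0:ℝ) 1, g (t*x + m*(1-t)*y) ≤ t ^ α * g x + m*(1 - t ^ α) * g y

theorem stmt6 (a b p q : ℝ) (f : ℝ → ℝ)
    (ha : 0 ≤ a) (hab : a < b) (hp : 0 < p) (hq : 0 < q)
    (hcont : ContinuousOn f (Set.Icc a b))
    (hint : IntervalIntegrable f volume a b)
    (k : ℝ) (hk : 1 < k)
    (α m : ℝ) (hα : α ∈ Set.Ioc (0:ℝ) 1) (hm : m ∈ Set.Ioc (0:ℝ) 1)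
    (hf : AMConvexOn (Set.Icc 0 (max b (a/m))) α m (fun x => |f x| ^ (k/(k-1)))) :
    ∫ x in a..b, (x-a)^p * (b-x)^q * f x
      ≤ (b-a)^(p+q+1) * (α+1)^(-((k-1)/k)) * (beta (k*p+1) (k*q+1))^(1/k)
          * (|f b| ^ (k/(k-1)) + α * m * |f (a/m)| ^ (k/(k-1))) ^ ((k-1)/k) := by
  obtain ⟨hα0, hα1⟩ := hα
  obtain ⟨hm0, hm1⟩ := hm
  have hk0 : (0:ℝ) < k := by linarith
  have hk1 : (0:ℝ) < k - 1 := by linarith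
  have hc : (0:ℝ) < b - a := sub_pos.2 hab
  set K := k / (k - 1) with hKdef
  have hK : k.HolderConjugate K := (Real.holderConjugate_iff_eq_conjExponent hk).2 rfl
  have hK1 : 1 / K = (k-1)/k := one_div_div _ _
  have hKpos : 0 < K := hK.symm.pos
  have hrpow : ∀ r : ℝ, 0 < r → Continuous (fun x : ℝ => x ^ r) := fun r hr =>
    continuous_iff_continuousAt.2 fun x => Real.continuousAt_rpow_const x r (Or.inr hr.le)
  have hwc : Continuous (fun x : ℝ => (x-a)^p * (b-x)^q) :=
    ((hrpow p hp).comp (continuous_id.sub continuous_const)).mul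
      ((hrpow q hq).comp (continuous_const.sub continuous_id))
  have hwnn : ∀ x ∈ Set.Icc a b, 0 ≤ (x-a)^p * (b-x)^q := fun x hx =>
    mul_nonneg (Real.rpow_nonneg (by linarith [hx.1]) _)
      (Real.rpow_nonneg (by linarith [hx.2]) _)
  -- step 1 : bound by absolute value of f
  have hwf_int : IntervalIntegrable (fun x => (x-a)^p*(b-x)^q * f x) volume a b := by
    apply ContinuousOn.intervalIntegrable
    rw [Set.uIcc_of_le hab.le]
    exact hwc.continuousOn.mul hcont
  have hwfa_int : IntervalIntegrable (fun x => (x-a)^p*(b-x)^q * |f x|) volume a b := by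
    apply ContinuousOn.intervalIntegrable
    rw [Set.uIcc_of_le hab.le]
    exact hwc.continuousOn.mul hcont.abs
  have step1 : ∫ x in a..b, (x-a)^p*(b-x)^q * f x
      ≤ ∫ x in a..b, (x-a)^p*(b-x)^q * |f x| :=
    intervalIntegral.integral_mono_on hab.le hwf_int hwfa_int
      (fun x hx => mul_le_mul_of_nonneg_left (le_abs_self _) (hwnn x hx))
  -- Hölder
  haveI hfin : IsFiniteMeasure (volume.restrict (Set.Ioc a b)) := by
    constructor
    rw [Measure.restrict_apply_univ, Real.volume_Ioc]
    exact ENNReal.ofReal_lt_top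
  obtain ⟨Cw, hCw⟩ := isCompact_Icc.exists_bound_of_continuousOn hwc.continuousOn
  obtain ⟨Cf, hCf⟩ := isCompact_Icc.exists_bound_of_continuousOn hcont
  have hwm : AEStronglyMeasurable (fun x => (x-a)^p*(b-x)^q)
      (volume.restrict (Set.Ioc a b)) := hwc.aestronglyMeasurable
  have hfm : AEStronglyMeasurable (fun x => |f x|) (volume.restrict (Set.Ioc a b)) :=
    (hcont.abs.mono Set.Ioc_subset_Icc_self).aestronglyMeasurable measurableSet_Ioc
  have hwmem : MemLp (fun x => (x-a)^p*(b-x)^q) (ENNReal.ofReal k)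
      (volume.restrict (Set.Ioc a b)) :=
    MemLp.of_bound hwm Cw ((ae_restrict_iff' measurableSet_Ioc).2
      (ae_of_all _ fun x hx => hCw x (Set.Ioc_subset_Icc_self hx)))
  have hfmem : MemLp (fun x => |f x|) (ENNReal.ofReal K)
      (volume.restrict (Set.Ioc a b)) :=
    MemLp.of_bound hfm Cf ((ae_restrict_iff' measurableSet_Ioc).2
      (ae_of_all _ fun x hx => by simpa using hCf x (Set.Ioc_subset_Icc_self hx)))
  have holder := MeasureTheory.integral_mul_le_Lp_mul_Lq_of_nonneg
      (μ := volume.restrict (Set.Ioc a b)) hK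
      ((ae_restrict_iff' measurableSet_Ioc).2
        (ae_of_all _ fun x hx => hwnn x (Set.Ioc_subset_Icc_self hx)))
      (ae_of_all _ fun x => abs_nonneg _) hwmem hfmem
  rw [← intervalIntegral.integral_of_le hab.le] at holder
  -- compute the weight factor
  have hbeta : beta (k*p+1) (k*q+1) = ∫ t in (0:ℝ)..1, t^(k*p) * (1-t)^(k*q) := by
    unfold beta
    norm_num
  have hA : ∫ x in Set.Ioc a b, ((x-a)^p*(b-x)^q)^k
      = (b-a)^(k*p+k*q+1) * beta (k*p+1) (k*q+1) := by
    rw [← intervalIntegral.integral_of_le hab.le, hbeta, ← aux_subst a b (k*p) (k*q) hab]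
    apply intervalIntegral.integral_congr
    intro x hx
    rw [Set.uIcc_of_le hab.le] at hx
    have h1 : (0:ℝ) ≤ x - a := by linarith [hx.1]
    have h2 : (0:ℝ) ≤ b - x := by linarith [hx.2]
    show ((x-a)^p*(b-x)^q)^k = (x-a)^(k*p)*(b-x)^(k*q)
    rw [Real.mul_rpow (Real.rpow_nonneg h1 _) (Real.rpow_nonneg h2 _),
      ← Real.rpow_mul h1, ← Real.rpow_mul h2, mul_comm p k, mul_comm q k]
  -- convexity bound on the f factor
  have hGc : ContinuousOn (fun x => |f x| ^ K) (Set.Icc a b) :=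
    (hrpow K hKpos).comp_continuousOn hcont.abs
  have hconv : ∀ x ∈ Set.Icc a b, |f x|^K
      ≤ ((x-a)/(b-a))^α * |f b|^K + m*(1 - ((x-a)/(b-a))^α) * |f (a/m)|^K := by
    intro x hx
    set t := (x-a)/(b-a) with htdef
    have ht : t ∈ Set.Icc (0:ℝ) 1 :=
      ⟨div_nonneg (by linarith [hx.1]) hc.le, (div_le_one hc).2 (by linarith [hx.2])⟩
    have hb_mem : b ∈ Set.Icc 0 (max b (a/m)) := ⟨by linarith, le_max_left _ _⟩
    have ham : a/m ∈ Set.Icc 0 (max b (a/m)) := ⟨div_nonneg ha hm0.le, le_max_right _ _⟩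
    have h := hf b hb_mem (a/m) ham t ht
    have harg : t*b + m*(1-t)*(a/m) = x := by
      have e : m*(1-t)*(a/m) = (1-t)*a := by
        field_simp
      rw [e, htdef]
      field_simp
      ring
    rw [harg] at h
    exact h
  have hcontα : Continuous (fun x : ℝ => ((x-a)/(b-a))^α) :=
    (hrpow α hα0).comp ((continuous_id.sub continuous_const).div_const (b-a))
  have hGint : IntervalIntegrable (fun x => |f x|^K) volume a b := by
    apply ContinuousOn.intervalIntegrable
    rw [Set.uIcc_of_le hab.le]
    exact hGc
  have hRint : IntervalIntegrable
      (fun x => ((x-a)/(b-a))^α * |f b|^K + m*(1 - ((x-a)/(b-a))^α) * |f (a/m)|^K)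
      volume a b := by
    apply Continuous.intervalIntegrable
    exact (hcontα.mul continuous_const).add
      ((continuous_const.mul (continuous_const.sub hcontα)).mul continuous_const)
  have step3 : ∫ x in a..b, |f x|^K
      ≤ ∫ x in a..b, (((x-a)/(b-a))^α * |f b|^K + m*(1 - ((x-a)/(b-a))^α) * |f (a/m)|^K) :=
    intervalIntegral.integral_mono_on hab.le hGint hRint hconv
  have hT : ∫ x in a..b, ((x-a)/(b-a))^α = (b-a)/(α+1) := aux_talpha a b α hab hα0
  have hRHS : ∫ x in a..b, (((x-a)/(b-a))^α * |f b|^K + m*(1 - ((x-a)/(b-a))^α) * |f (a/m)|^K)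
      = (b-a)/(α+1) * (|f b|^K + α*m*|f (a/m)|^K) := by
    have hre : (fun x => ((x-a)/(b-a))^α * |f b|^K + m*(1 - ((x-a)/(b-a))^α) * |f (a/m)|^K)
        = (fun x => (|f b|^K - m*|f (a/m)|^K) * ((x-a)/(b-a))^α + m * |f (a/m)|^K) := by
      funext x; ring
    rw [hre, intervalIntegral.integral_add
        (f := fun x => (|f b|^K - m*|f (a/m)|^K) * ((x-a)/(b-a))^α) (g := fun _ => m * |f (a/m)|^K)
        ((continuous_const.mul hcontα).intervalIntegrable _ _)
        (intervalIntegrable_const),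
      intervalIntegral.integral_const_mul, hT, intervalIntegral.integral_const,
      smul_eq_mul]
    field_simp
    ring
  have hB2le : ∫ x in Set.Ioc a b, |f x|^K
      ≤ (b-a)/(α+1) * (|f b|^K + α*m*|f (a/m)|^K) := by
    rw [← intervalIntegral.integral_of_le hab.le]
    calc _ ≤ _ := step3
    _ = _ := hRHS
  have hB2nn : 0 ≤ ∫ x in Set.Ioc a b, |f x|^K :=
    integral_nonneg fun x => Real.rpow_nonneg (abs_nonneg _) _
  have hSnn : 0 ≤ |f b|^K + α*m*|f (a/m)|^K :=
    add_nonneg (Real.rpow_nonneg (abs_nonneg _) _)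
      (mul_nonneg (mul_nonneg hα0.le hm0.le) (Real.rpow_nonneg (abs_nonneg _) _))
  have hBnn : 0 ≤ beta (k*p+1) (k*q+1) := by
    rw [hbeta]
    apply intervalIntegral.integral_nonneg (by norm_num)
    intro t ht
    exact mul_nonneg (Real.rpow_nonneg ht.1 _) (Real.rpow_nonneg (by linarith [ht.2]) _)
  -- combine
  set S := |f b|^K + α*m*|f (a/m)|^K
  set B := beta (k*p+1) (k*q+1)
  have hfac2 : (∫ x in Set.Ioc a b, |f x|^K)^(1/K) ≤ ((b-a)/(α+1) * S)^(1/K) :=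
    Real.rpow_le_rpow hB2nn hB2le (by positivity)
  have hfac1nn : 0 ≤ (∫ x in Set.Ioc a b, ((x-a)^p*(b-x)^q)^k)^(1/k) :=
    Real.rpow_nonneg (by rw [hA]; positivity) _
  have final : ∫ x in a..b, (x-a)^p*(b-x)^q * |f x|
      ≤ ((b-a)^(k*p+k*q+1) * B)^(1/k) * ((b-a)/(α+1) * S)^(1/K) := by
    calc ∫ x in a..b, (x-a)^p*(b-x)^q * |f x| ≤ _ := holder
    _ ≤ (∫ x in Set.Ioc a b, ((x-a)^p*(b-x)^q)^k)^(1/k) * ((b-a)/(α+1) * S)^(1/K) :=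
        mul_le_mul_of_nonneg_left hfac2 hfac1nn
    _ = _ := by rw [hA]
  have hEq : ((b-a)^(k*p+k*q+1) * B)^(1/k) * ((b-a)/(α+1) * S)^(1/K)
      = (b-a)^(p+q+1) * (α+1)^(-((k-1)/k)) * B^(1/k) * S^((k-1)/k) := by
    have hα1' : (0:ℝ) < α + 1 := by linarith
    rw [Real.mul_rpow (Real.rpow_nonneg hc.le _) hBnn,
      Real.mul_rpow (div_nonneg hc.le hα1'.le) hSnn,
      Real.div_rpow hc.le hα1'.le, ← Real.rpow_mul hc.le, hK1,
      Real.rpow_neg hα1'.le, div_eq_mul_inv]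
    have he : (b-a)^((k*p+k*q+1)*(1/k)) * (b-a)^((k-1)/k) = (b-a)^(p+q+1) := by
      rw [← Real.rpow_add hc]
      congr 1
      field_simp
      ring
    calc (b-a)^((k*p+k*q+1)*(1/k)) * B^(1/k)
          * ((b-a)^((k-1)/k) * ((α+1)^((k-1)/k))⁻¹ * S^((k-1)/k))
        = ((b-a)^((k*p+k*q+1)*(1/k)) * (b-a)^((k-1)/k)) * ((α+1)^((k-1)/k))⁻¹
          * B^(1/k) * S^((k-1)/k) := by ring
    _ = _ := by rw [he]; norm_num
  calc ∫ x in a..b, (x-a)^p * (b-x)^q * f x ≤ _ := step1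
  _ ≤ _ := final
  _ = _ := hEq
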